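/- arXiv:1909.00678 — 4 statements merged into one kernel-verified Lean document; each statement's English description precedes it below -/
import Mathlib

section
/- For every x ∈ X, φ(x) ≤ ψ(x), where φ is the supremum function associated to Γ = { (f,a) ∈ S_F × ℝ : A ∩ H_{f,a} = ∅ } and ψ is the F-distance from x to A. -/
/-- The weak-star topology `σ(X**, X*)` on the bidual of `X`. -/
noncomputable def wstarTopology (X : Type*) [NormedAddCommGroup X] [NormedSpace ℝ X] :
    TopologicalSpace ((X →L[ℝ] ℝ) →L[ℝ] ℝ) :=
  TopologicalSpace.induced (fun (ξ : (X →L[ℝ] ℝ) →L[ℝ] ℝ) (f : X →L[ℝ] ℝ) => ξ f)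
    Pi.topologicalSpace

/-- For every `x ∈ X`, `φ(x) ≤ ψ(x)`, where `φ` is the supremum function associated to
`Γ = {(f,a) ∈ S_F × ℝ : A ∩ H_{f,a} = ∅}` and `ψ` is the `F`-distance from `x` to `A`. -/
theorem statement6 (X : Type*) [NormedAddCommGroup X] [NormedSpace ℝ X] [CompleteSpace X]
    (F : Subspace ℝ (X →L[ℝ] ℝ)) (hF : F ≠ ⊥)
    (A : Set X) (hA : A.Nonempty) (hAconv : Convex ℝ A) (hAbdd : Bornology.IsBounded A)
    (Γ : Set ((X →L[ℝ] ℝ) × ℝ))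
    (hΓ : Γ = {p : (X →L[ℝ] ℝ) × ℝ | p.1 ∈ F ∧ ‖p.1‖ = 1 ∧ A ∩ {y : X | p.1 y > p.2} = ∅})
    (φ ψ : X → ℝ)
    (hφ : ∀ x : X, φ x = sSup ({r : ℝ | ∃ p ∈ Γ, r = p.1 x - p.2} ∪ {0}))
    (hψ : ∀ x : X, ψ x = sInf {r : ℝ |
      ∃ ξ ∈ @closure _ (wstarTopology X) (NormedSpace.inclusionInDoubleDual ℝ X '' A),
        r = sSup {t : ℝ | ∃ f ∈ F, ‖f‖ = 1 ∧
          t = (NormedSpace.inclusionInDoubleDual ℝ X x - ξ) f}})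
    (x : X) :
    φ x ≤ ψ x := by
  classical
  letI : TopologicalSpace ((X →L[ℝ] ℝ) →L[ℝ] ℝ) := wstarTopology X
  set J := NormedSpace.inclusionInDoubleDual ℝ X with hJ
  -- a unit vector in F
  obtain ⟨f0, hf0F, hf0ne⟩ : ∃ f, f ∈ F ∧ f ≠ 0 := by
    by_contra h
    push_neg at h
    exact hF ((Submodule.eq_bot_iff F).mpr h)
  set g0 : X →L[ℝ] ℝ := (‖f0‖)⁻¹ • f0 with hg0def
  have hg0F : g0 ∈ F := F.smul_mem _ hf0F
  have hg0 : ‖g0‖ = 1 := by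
    have : ‖g0‖ = ‖f0‖⁻¹ * ‖f0‖ := by
      rw [hg0def, norm_smul (‖f0‖⁻¹) f0, norm_inv, norm_norm]
    rw [this, inv_mul_cancel₀ (norm_ne_zero_iff.mpr hf0ne)]
  -- evaluation is w*-continuous
  have hev : ∀ f : X →L[ℝ] ℝ, Continuous fun ξ : (X →L[ℝ] ℝ) →L[ℝ] ℝ => ξ f := by
    intro f
    exact (continuous_apply f).comp continuous_induced_dom
  -- key: elements of the w*-closure of J''A respect the halfspace bounds
  have hclos : ∀ ξ ∈ closure (J '' A), ∀ f : X →L[ℝ] ℝ, ∀ a : ℝ,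
      A ∩ {y : X | f y > a} = ∅ → ξ f ≤ a := by
    intro ξ hξ f a hfa
    have hsub : J '' A ⊆ {η : (X →L[ℝ] ℝ) →L[ℝ] ℝ | η f ≤ a} := by
      rintro _ ⟨y, hy, rfl⟩
      have hnot : ¬ f y > a := fun h => Set.eq_empty_iff_forall_notMem.mp hfa y ⟨hy, h⟩
      have : J y f = f y := rfl
      simpa [this] using not_lt.mp hnot
    have hcl : IsClosed {η : (X →L[ℝ] ℝ) →L[ℝ] ℝ | η f ≤ a} :=
      isClosed_Iic.preimage (hev f)
    exact closure_minimal hsub hcl hξ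
  rw [hφ, hψ]
  obtain ⟨x0, hx0⟩ := hA
  refine le_csInf ⟨_, J x0, subset_closure ⟨x0, hx0, rfl⟩, rfl⟩ ?_
  rintro r ⟨ξ, hξ, rfl⟩
  set T : Set ℝ := {t : ℝ | ∃ f ∈ F, ‖f‖ = 1 ∧ t = (J x - ξ) f} with hT
  have hbddT : BddAbove T := by
    refine ⟨‖J x - ξ‖, ?_⟩
    rintro t ⟨f, hfF, hfn, rfl⟩
    calc (J x - ξ) f ≤ ‖(J x - ξ) f‖ := le_abs_self _
      _ ≤ ‖J x - ξ‖ * ‖f‖ := (J x - ξ).le_opNorm f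
      _ = ‖J x - ξ‖ := by rw [hfn, mul_one]
  have hsup0 : (0 : ℝ) ≤ sSup T := by
    have h2 : (J x - ξ) g0 ∈ T := ⟨g0, hg0F, hg0, rfl⟩
    have h3 : (J x - ξ) (-g0) ∈ T :=
      ⟨-g0, F.neg_mem hg0F, by rw [norm_neg, hg0], rfl⟩
    have e : (J x - ξ) (-g0) = -((J x - ξ) g0) := map_neg _ _
    have l2 := le_csSup hbddT h2
    have l3 := le_csSup hbddT h3
    rw [e] at l3
    linarith
  refine csSup_le ⟨0, Or.inr rfl⟩ ?_
  rintro t (⟨p, hp, rfl⟩ | ht)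
  · rw [hΓ] at hp
    obtain ⟨hpF, hpn, hpA⟩ := hp
    have h1 : ξ p.1 ≤ p.2 := hclos ξ hξ p.1 p.2 hpA
    have h2 : (J x - ξ) p.1 ∈ T := ⟨p.1, hpF, hpn, rfl⟩
    have h3 := le_csSup hbddT h2
    have e : (J x - ξ) p.1 = p.1 x - ξ p.1 := by
      simp [ContinuousLinearMap.sub_apply]
      rfl
    rw [e] at h3
    linarith
  · obtain rfl : t = 0 := ht
    exact hsup0
end

section
/- For every x ∈ X, ψ(x) ≤ φ(x); consequently the F-distance ψ from x to A coincides with the function φ associated to Γ = { (f,a) ∈ S_F × ℝ : A ∩ H_{f,a} = ∅ }. -/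
lemma real_sSup_scale (s : Set ℝ) (hs : s.Nonempty) (hbdd : BddAbove s) {t : ℝ} (ht : 0 < t) :
    sSup ((fun r => t * r) '' s) = t * sSup s := by
  obtain ⟨B, hB⟩ := hbdd
  have hbddi : BddAbove ((fun r => t * r) '' s) := by
    refine ⟨t * B, ?_⟩
    rintro r ⟨y, hy, rfl⟩
    exact mul_le_mul_of_nonneg_left (hB hy) ht.le
  refine le_antisymm (csSup_le (hs.image _) ?_) ?_
  · rintro r ⟨y, hy, rfl⟩
    exact mul_le_mul_of_nonneg_left (le_csSup ⟨B, hB⟩ hy) ht.le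
  · have h2 : sSup s ≤ t⁻¹ * sSup ((fun r => t * r) '' s) := by
      refine csSup_le hs fun y hy => ?_
      rw [le_inv_mul_iff₀ ht]
      exact le_csSup hbddi ⟨y, hy, rfl⟩
    calc t * sSup s ≤ t * (t⁻¹ * sSup ((fun r => t * r) '' s)) :=
          mul_le_mul_of_nonneg_left h2 ht.le
      _ = sSup ((fun r => t * r) '' s) := by
          rw [← mul_assoc, mul_inv_cancel₀ ht.ne', one_mul]

lemma real_sInf_scale (s : Set ℝ) (hs : s.Nonempty) (hbdd : BddBelow s) {t : ℝ} (ht : 0 < t) :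
    sInf ((fun r => t * r) '' s) = t * sInf s := by
  obtain ⟨B, hB⟩ := hbdd
  have hbddi : BddBelow ((fun r => t * r) '' s) := by
    refine ⟨t * B, ?_⟩
    rintro r ⟨y, hy, rfl⟩
    exact mul_le_mul_of_nonneg_left (hB hy) ht.le
  refine le_antisymm ?_ (le_csInf (hs.image _) ?_)
  · have h2 : t⁻¹ * sInf ((fun r => t * r) '' s) ≤ sInf s := by
      refine le_csInf hs fun y hy => ?_
      rw [inv_mul_le_iff₀ ht]
      exact csInf_le hbddi ⟨y, hy, rfl⟩
    calc sInf ((fun r => t * r) '' s)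
        = t * (t⁻¹ * sInf ((fun r => t * r) '' s)) := by
          rw [← mul_assoc, mul_inv_cancel₀ ht.ne', one_mul]
      _ ≤ t * sInf s := mul_le_mul_of_nonneg_left h2 ht.le
  · rintro r ⟨y, hy, rfl⟩
    exact mul_le_mul_of_nonneg_left (csInf_le ⟨B, hB⟩ hy) ht.le

lemma findim_approx {X : Type*} [NormedAddCommGroup X] [NormedSpace ℝ X]
    {A : Set X} (hA : A.Nonempty) (hAconv : Convex ℝ A)
    (ξ : (X →L[ℝ] ℝ) →ₗ[ℝ] ℝ)
    (hξ : ∀ g : X →L[ℝ] ℝ, ξ g ≤ sSup ((fun y => g y) '' A))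
    (I : Finset (X →L[ℝ] ℝ)) {ε : ℝ} (hε : 0 < ε) :
    ∃ a ∈ A, ∀ g ∈ I, |g a - ξ g| < ε := by
  classical
  set T : X →ₗ[ℝ] ({g // g ∈ I} → ℝ) :=
    LinearMap.pi (fun g => ((g : X →L[ℝ] ℝ) : X →ₗ[ℝ] ℝ)) with hT
  set v : {g // g ∈ I} → ℝ := fun g => ξ (g : X →L[ℝ] ℝ) with hv
  have hsingle : ∀ (i : {g // g ∈ I}) (c : ℝ),
      (Pi.single i c : {g // g ∈ I} → ℝ) = c • (Pi.single i 1 : {g // g ∈ I} → ℝ) := by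
    intro i c
    rw [← Pi.single_smul, smul_eq_mul, mul_one]
  have hvmem : v ∈ closure (T '' A) := by
    by_contra hvn
    obtain ⟨l, u, hlt, hul⟩ :=
      geometric_hahn_banach_closed_point ((hAconv.linear_image T).closure) isClosed_closure hvn
    set g₀ : X →L[ℝ] ℝ :=
      ∑ i : {g // g ∈ I}, l (Pi.single i 1) • (i : X →L[ℝ] ℝ) with hg₀
    have hTy : ∀ y : X, l (T y) = g₀ y := by
      intro y
      conv_lhs => rw [← Finset.univ_sum_single (T y)]
      rw [map_sum, hg₀, ContinuousLinearMap.sum_apply]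
      refine Finset.sum_congr rfl fun i _ => ?_
      rw [hsingle i (T y i), map_smul, smul_eq_mul, ContinuousLinearMap.smul_apply, smul_eq_mul]
      simp [hT, mul_comm]
    have hξg₀ : ξ g₀ = l v := by
      have e1 : ξ g₀ = ∑ i : {g // g ∈ I}, l (Pi.single i 1) * ξ (i : X →L[ℝ] ℝ) := by
        rw [hg₀, map_sum]
        refine Finset.sum_congr rfl fun i _ => ?_
        rw [map_smul, smul_eq_mul]
      have e2 : l v = ∑ i : {g // g ∈ I}, l (Pi.single i 1) * ξ (i : X →L[ℝ] ℝ) := by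
        conv_lhs => rw [← Finset.univ_sum_single v]
        rw [map_sum]
        refine Finset.sum_congr rfl fun i _ => ?_
        rw [hsingle i (v i), map_smul, smul_eq_mul, hv, mul_comm]
      rw [e1, e2]
    have h1 : ξ g₀ ≤ u := by
      refine le_trans (hξ g₀) (csSup_le (hA.image _) ?_)
      rintro r ⟨y, hy, rfl⟩
      have := hlt (T y) (subset_closure ⟨y, hy, rfl⟩)
      rw [hTy y] at this
      exact this.le
    rw [hξg₀] at h1
    exact absurd (lt_of_le_of_lt h1 hul) (lt_irrefl _)
  rw [Metric.mem_closure_iff] at hvmem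
  obtain ⟨b, ⟨a, haA, rfl⟩, hdist⟩ := hvmem ε hε
  refine ⟨a, haA, fun g hg => ?_⟩
  have := (dist_pi_lt_iff hε).mp hdist ⟨g, hg⟩
  rw [Real.dist_eq] at this
  have h2 : v ⟨g, hg⟩ = ξ g := rfl
  have h3 : T a ⟨g, hg⟩ = g a := rfl
  rw [h2, h3] at this
  rwa [abs_sub_comm] at this

lemma mem_wstar_closure {X : Type*} [NormedAddCommGroup X] [NormedSpace ℝ X]
    {A : Set X} (Ξ : (X →L[ℝ] ℝ) →L[ℝ] ℝ)
    (happrox : ∀ (I : Finset (X →L[ℝ] ℝ)), ∀ ε : ℝ, 0 < ε →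
      ∃ a ∈ A, ∀ g ∈ I, |g a - Ξ g| < ε) :
    Ξ ∈ @closure _ (wstarTopology X) (NormedSpace.inclusionInDoubleDual ℝ X '' A) := by
  classical
  letI : TopologicalSpace ((X →L[ℝ] ℝ) →L[ℝ] ℝ) := wstarTopology X
  set e : ((X →L[ℝ] ℝ) →L[ℝ] ℝ) → ((X →L[ℝ] ℝ) → ℝ) := fun ξ f => ξ f with he
  refine mem_closure_iff.mpr ?_
  intro O hO hΞO
  obtain ⟨U, hU, rfl⟩ := isOpen_induced_iff.mp hO
  have hΞU : e Ξ ∈ U := hΞO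
  obtain ⟨I, u, hu, hpi⟩ := isOpen_pi_iff.mp hU _ hΞU
  have hδ : ∀ f : X →L[ℝ] ℝ, ∃ δ : ℝ, 0 < δ ∧ (f ∈ I → Metric.ball (Ξ f) δ ⊆ u f) := by
    intro f
    by_cases hf : f ∈ I
    · obtain ⟨δ, hδ0, hδ⟩ := Metric.isOpen_iff.mp (hu f hf).1 _ (hu f hf).2
      exact ⟨δ, hδ0, fun _ => hδ⟩
    · exact ⟨1, one_pos, fun h => absurd h hf⟩
  choose δ hδ0 hδball using hδ
  rcases I.eq_empty_or_nonempty with hIe | hIne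
  · obtain ⟨a, haA, -⟩ := happrox ∅ 1 one_pos
    refine ⟨NormedSpace.inclusionInDoubleDual ℝ X a, ?_, ⟨a, haA, rfl⟩⟩
    show e _ ∈ U
    apply hpi
    intro f hf
    rw [hIe] at hf
    exact absurd hf (Finset.notMem_empty f)
  · set ε : ℝ := I.inf' hIne δ with hε
    have hε0 : 0 < ε := by
      rw [hε, Finset.lt_inf'_iff]
      exact fun f _ => hδ0 f
    obtain ⟨a, haA, ha⟩ := happrox I ε hε0
    refine ⟨NormedSpace.inclusionInDoubleDual ℝ X a, ?_, ⟨a, haA, rfl⟩⟩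
    show e _ ∈ U
    apply hpi
    intro f hf
    apply hδball f hf
    rw [Metric.mem_ball]
    have h1 : e (NormedSpace.inclusionInDoubleDual ℝ X a) f = f a := rfl
    rw [h1, Real.dist_eq]
    exact lt_of_lt_of_le (ha f hf) (Finset.inf'_le δ hf)

lemma exists_xi {X : Type*} [NormedAddCommGroup X] [NormedSpace ℝ X]
    (F : Subspace ℝ (X →L[ℝ] ℝ))
    {A : Set X} (hA : A.Nonempty)
    (hbdd : ∀ g : X →L[ℝ] ℝ, BddAbove ((fun y => g y) '' A))
    (psmul : ∀ (t : ℝ), 0 < t → ∀ g : X →L[ℝ] ℝ,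
      sSup ((fun y => (t • g) y) '' A) = t * sSup ((fun y => g y) '' A))
    {x : X} {Φ : ℝ} (hΦ0 : 0 ≤ Φ)
    (hkey : ∀ f ∈ F, f x - ‖f‖ * Φ ≤ sSup ((fun y => f y) '' A)) :
    ∃ ξ : (X →L[ℝ] ℝ) →ₗ[ℝ] ℝ,
      (∀ g : X →L[ℝ] ℝ, ξ g ≤ sSup ((fun y => g y) '' A)) ∧
      (∀ f ∈ F, f x - ‖f‖ * Φ ≤ ξ f) := by
  classical
  set p : (X →L[ℝ] ℝ) → ℝ := fun g => sSup ((fun y => g y) '' A) with hp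
  set c : (X →L[ℝ] ℝ) → ℝ := fun f => f x - ‖f‖ * Φ with hc
  have hc0 : c 0 = 0 := by simp [hc]
  have hple : ∀ (g : X →L[ℝ] ℝ) (y : X), y ∈ A → g y ≤ p g := fun g y hy =>
    le_csSup (hbdd g) ⟨y, hy, rfl⟩
  have hpadd : ∀ g h : X →L[ℝ] ℝ, p (g + h) ≤ p g + p h := by
    intro g h
    refine csSup_le (hA.image _) ?_
    rintro r ⟨y, hy, rfl⟩
    exact add_le_add (hple g y hy) (hple h y hy)
  have hp0 : p 0 = 0 := by
    show sSup ((fun y => (0 : X →L[ℝ] ℝ) y) '' A) = 0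
    have himg : (fun y => (0 : X →L[ℝ] ℝ) y) '' A = {0} := by
      simp only [ContinuousLinearMap.zero_apply]
      exact hA.image_const 0
    rw [himg]
    exact csSup_singleton 0
  have hpsmul : ∀ (t : ℝ), 0 < t → ∀ g : X →L[ℝ] ℝ, p (t • g) = t * p g :=
    fun t ht g => psmul t ht g
  have hcp : ∀ f ∈ F, c f ≤ p f := fun f hf => hkey f hf
  -- the sublinear functional q
  set Q : (X →L[ℝ] ℝ) → Set ℝ := fun g => {r | ∃ f ∈ F, r = p (g + f) - c f} with hQ
  have hQne : ∀ g, (Q g).Nonempty := by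
    intro g
    exact ⟨p g, 0, F.zero_mem, by rw [add_zero, hc0, sub_zero]⟩
  have hQbdd : ∀ g, ∀ r ∈ Q g, -p (-g) ≤ r := by
    rintro g r ⟨f, hf, rfl⟩
    have h1 : p f ≤ p (g + f) + p (-g) := by
      have : f = g + f + -g := by abel
      calc p f = p (g + f + -g) := by rw [← this]
        _ ≤ p (g + f) + p (-g) := hpadd _ _
    have h2 := hcp f hf
    linarith
  set q : (X →L[ℝ] ℝ) → ℝ := fun g => sInf (Q g) with hq
  have hqlep : ∀ g, q g ≤ p g :=
    fun g => csInf_le ⟨-p (-g), fun r hr => hQbdd g r hr⟩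
      ⟨0, F.zero_mem, by rw [add_zero, hc0, sub_zero]⟩
  have hchom : ∀ (t : ℝ), 0 < t → ∀ f : X →L[ℝ] ℝ, c (t • f) = t * c f := by
    intro t ht f
    show (t • f) x - ‖t • f‖ * Φ = t * (f x - ‖f‖ * Φ)
    rw [norm_smul t f, Real.norm_eq_abs, abs_of_pos ht, ContinuousLinearMap.smul_apply, smul_eq_mul]
    ring
  have hQscale : ∀ (t : ℝ), 0 < t → ∀ g, Q (t • g) = (fun r => t * r) '' Q g := by
    intro t ht g
    ext r
    constructor
    · rintro ⟨f, hf, rfl⟩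
      refine ⟨p (g + t⁻¹ • f) - c (t⁻¹ • f), ⟨t⁻¹ • f, F.smul_mem _ hf, rfl⟩, ?_⟩
      have h1 : t • g + f = t • (g + t⁻¹ • f) := by
        rw [smul_add, smul_inv_smul₀ ht.ne']
      dsimp only
      rw [h1, hpsmul t ht, mul_sub, ← hchom t ht, smul_inv_smul₀ ht.ne']
    · rintro ⟨r', ⟨f, hf, rfl⟩, rfl⟩
      refine ⟨t • f, F.smul_mem _ hf, ?_⟩
      have h1 : t • g + t • f = t • (g + f) := by rw [smul_add]
      dsimp only
      rw [h1, hpsmul t ht, hchom t ht]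
      ring
  have hqhom : ∀ (t : ℝ), 0 < t → ∀ g, q (t • g) = t * q g := by
    intro t ht g
    rw [hq]
    simp only
    rw [hQscale t ht g]
    exact real_sInf_scale _ (hQne g) ⟨-p (-g), fun r hr => hQbdd g r hr⟩ ht
  have hqadd : ∀ g₁ g₂, q (g₁ + g₂) ≤ q g₁ + q g₂ := by
    intro g₁ g₂
    have core : ∀ r₁ ∈ Q g₁, ∀ r₂ ∈ Q g₂, q (g₁ + g₂) ≤ r₁ + r₂ := by
      rintro r₁ ⟨f₁, hf₁, rfl⟩ r₂ ⟨f₂, hf₂, rfl⟩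
      have hmem : p (g₁ + g₂ + (f₁ + f₂)) - c (f₁ + f₂) ∈ Q (g₁ + g₂) :=
        ⟨f₁ + f₂, F.add_mem hf₁ hf₂, rfl⟩
      refine le_trans (csInf_le ⟨-p (-(g₁ + g₂)), fun r hr => hQbdd _ r hr⟩ hmem) ?_
      have h1 : p (g₁ + g₂ + (f₁ + f₂)) ≤ p (g₁ + f₁) + p (g₂ + f₂) := by
        have : g₁ + g₂ + (f₁ + f₂) = (g₁ + f₁) + (g₂ + f₂) := by abel
        rw [this]; exact hpadd _ _
      have h2 : c f₁ + c f₂ ≤ c (f₁ + f₂) := by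
        simp only [hc, ContinuousLinearMap.add_apply]
        have := mul_le_mul_of_nonneg_right (norm_add_le f₁ f₂) hΦ0
        linarith
      linarith
    rw [← sub_le_iff_le_add]
    refine le_csInf (hQne g₁) fun r₁ hr₁ => ?_
    rw [sub_le_iff_le_add, ← sub_le_iff_le_add']
    refine le_csInf (hQne g₂) fun r₂ hr₂ => ?_
    rw [sub_le_iff_le_add']
    exact core r₁ hr₁ r₂ hr₂
  have hq0 : 0 ≤ q 0 := by
    refine le_csInf (hQne 0) ?_
    rintro r ⟨f, hf, rfl⟩
    rw [zero_add]
    have := hcp f hf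
    linarith
  -- Hahn-Banach extension from the trivial subspace
  obtain ⟨ξ, -, hξq⟩ :=
    exists_extension_of_le_sublinear
      (⟨⊥, 0⟩ : (X →L[ℝ] ℝ) →ₗ.[ℝ] ℝ) q
      (fun t ht g => hqhom t ht g) hqadd
      (by
        rintro ⟨y, hy⟩
        have hy0 : y = 0 := by simpa using hy
        simp only [hy0]
        simpa using hq0)
  refine ⟨ξ, fun g => le_trans (hξq g) (hqlep g), fun f hf => ?_⟩
  have h1 : ξ (-f) ≤ q (-f) := hξq (-f)
  have h2 : q (-f) ≤ -c f := by
    have hmem : p (-f + f) - c f ∈ Q (-f) := ⟨f, hf, rfl⟩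
    have := csInf_le ⟨-p (-(-f)), fun r hr => hQbdd _ r hr⟩ hmem
    rw [neg_add_cancel, hp0] at this
    linarith
  have h3 : ξ (-f) = -ξ f := map_neg ξ f
  rw [h3] at h1
  have : c f ≤ ξ f := by linarith
  simpa [hc] using this

/-- For every `x ∈ X`, `ψ(x) ≤ φ(x)`; consequently the `F`-distance `ψ` coincides with
the function `φ` associated to `Γ = {(f,a) ∈ S_F × ℝ : A ∩ H_{f,a} = ∅}`. -/
theorem statement7 (X : Type*) [NormedAddCommGroup X] [NormedSpace ℝ X] [CompleteSpace X]
    (F : Subspace ℝ (X →L[ℝ] ℝ)) (hF : F ≠ ⊥)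
    (A : Set X) (hA : A.Nonempty) (hAconv : Convex ℝ A) (hAbdd : Bornology.IsBounded A)
    (Γ : Set ((X →L[ℝ] ℝ) × ℝ))
    (hΓ : Γ = {p : (X →L[ℝ] ℝ) × ℝ | p.1 ∈ F ∧ ‖p.1‖ = 1 ∧ A ∩ {y : X | p.1 y > p.2} = ∅})
    (φ ψ : X → ℝ)
    (hφ : ∀ x : X, φ x = sSup ({r : ℝ | ∃ p ∈ Γ, r = p.1 x - p.2} ∪ {0}))
    (hψ : ∀ x : X, ψ x = sInf {r : ℝ |
      ∃ ξ ∈ @closure _ (wstarTopology X) (NormedSpace.inclusionInDoubleDual ℝ X '' A),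
        r = sSup {t : ℝ | ∃ f ∈ F, ‖f‖ = 1 ∧
          t = (NormedSpace.inclusionInDoubleDual ℝ X x - ξ) f}})
    :
    (∀ x : X, ψ x ≤ φ x) ∧ ψ = φ := by
  classical
  obtain ⟨x₀, hx₀⟩ := hA
  have hA : A.Nonempty := ⟨x₀, hx₀⟩
  obtain ⟨R, hR⟩ := hAbdd.subset_closedBall 0
  set J := NormedSpace.inclusionInDoubleDual ℝ X with hJ
  have hnormy : ∀ y ∈ A, ‖y‖ ≤ R := fun y hy => mem_closedBall_zero_iff.mp (hR hy)
  have hbdd : ∀ g : X →L[ℝ] ℝ, BddAbove ((fun y => g y) '' A) := by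
    intro g
    refine ⟨‖g‖ * R, ?_⟩
    rintro r ⟨y, hy, rfl⟩
    calc g y ≤ ‖g y‖ := le_abs_self _
      _ ≤ ‖g‖ * ‖y‖ := g.le_opNorm y
      _ ≤ ‖g‖ * R := mul_le_mul_of_nonneg_left (hnormy y hy) (norm_nonneg g)
  have hsupb : ∀ g : X →L[ℝ] ℝ, sSup ((fun y => g y) '' A) ≤ ‖g‖ * R := by
    intro g
    refine csSup_le (hA.image _) ?_
    rintro r ⟨y, hy, rfl⟩
    calc g y ≤ ‖g y‖ := le_abs_self _
      _ ≤ ‖g‖ * ‖y‖ := g.le_opNorm y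
      _ ≤ ‖g‖ * R := mul_le_mul_of_nonneg_left (hnormy y hy) (norm_nonneg g)
  have psmul : ∀ (t : ℝ), 0 < t → ∀ g : X →L[ℝ] ℝ,
      sSup ((fun y => (t • g) y) '' A) = t * sSup ((fun y => g y) '' A) := by
    intro t ht g
    have himg : (fun y => (t • g) y) '' A = (fun r => t * r) '' ((fun y => g y) '' A) := by
      rw [Set.image_image]
      refine Set.image_congr fun y _ => ?_
      rw [ContinuousLinearMap.smul_apply, smul_eq_mul]
    rw [himg, real_sSup_scale _ (hA.image _) (hbdd g) ht]
  -- φ facts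
  have hφbdd : ∀ x : X, BddAbove ({r : ℝ | ∃ p ∈ Γ, r = p.1 x - p.2} ∪ {0}) := by
    intro x
    refine ⟨‖x - x₀‖, ?_⟩
    rintro r (⟨⟨f, a⟩, hm, rfl⟩ | hr0)
    · rw [hΓ] at hm
      obtain ⟨hfF, hf1, hempty⟩ := hm
      have hfa : f x₀ ≤ a := by
        by_contra hlt
        exact absurd hempty (Set.nonempty_iff_ne_empty.mp ⟨x₀, hx₀, not_le.mp hlt⟩)
      calc (f, a).1 x - (f, a).2 ≤ f x - f x₀ := by simp only; linarith
        _ = f (x - x₀) := by rw [map_sub]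
        _ ≤ ‖f (x - x₀)‖ := le_abs_self _
        _ ≤ ‖f‖ * ‖x - x₀‖ := f.le_opNorm _
        _ = ‖x - x₀‖ := by rw [hf1, one_mul]
    · simp only [Set.mem_singleton_iff] at hr0
      subst hr0
      exact norm_nonneg _
  have hφ0 : ∀ x : X, 0 ≤ φ x := by
    intro x
    rw [hφ x]
    exact le_csSup (hφbdd x) (Or.inr rfl)
  have hkey : ∀ x : X, ∀ f ∈ F, f x - ‖f‖ * φ x ≤ sSup ((fun y => f y) '' A) := by
    intro x f hfF
    rcases eq_or_ne f 0 with rfl | hf0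
    · have himg : (fun y => (0 : X →L[ℝ] ℝ) y) '' A = {0} := by
        simp only [ContinuousLinearMap.zero_apply]
        exact hA.image_const 0
      rw [himg, csSup_singleton]
      simp
    · have hnorm : 0 < ‖f‖ := norm_pos_iff.mpr hf0
      set f' : X →L[ℝ] ℝ := ‖f‖⁻¹ • f with hf'def
      have hf'F : f' ∈ F := F.smul_mem _ hfF
      have hf'1 : ‖f'‖ = 1 := by
        rw [hf'def, norm_smul (‖f‖⁻¹) f, Real.norm_eq_abs, abs_of_pos (inv_pos.mpr hnorm),
          inv_mul_cancel₀ hnorm.ne']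
      set a := sSup ((fun y => f' y) '' A) with ha
      have hmemΓ : (f', a) ∈ Γ := by
        rw [hΓ]
        refine ⟨hf'F, hf'1, ?_⟩
        refine Set.eq_empty_iff_forall_notMem.mpr ?_
        rintro y ⟨hyA, hgt⟩
        exact absurd (le_csSup (hbdd f') ⟨y, hyA, rfl⟩) (not_le.mpr hgt)
      have hφge : f' x - a ≤ φ x := by
        rw [hφ x]
        exact le_csSup (hφbdd x) (Or.inl ⟨(f', a), hmemΓ, rfl⟩)
      have hfeq : f = ‖f‖ • f' := (smul_inv_smul₀ hnorm.ne' f).symm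
      have hpa : sSup ((fun y => f y) '' A) = ‖f‖ * a := by
        conv_lhs => rw [hfeq]
        rw [psmul _ hnorm f', ha]
      have hfx : f x = ‖f‖ * f' x := by
        conv_lhs => rw [hfeq]
        rw [ContinuousLinearMap.smul_apply, smul_eq_mul]
      have hmul := mul_le_mul_of_nonneg_left (show f' x - φ x ≤ a by linarith) hnorm.le
      rw [mul_sub] at hmul
      rw [hpa, hfx]
      linarith
  -- unit vector in F
  obtain ⟨f₀, hf₀F, hf₀⟩ := (Submodule.ne_bot_iff F).mp hF
  have hf₀norm : 0 < ‖f₀‖ := norm_pos_iff.mpr hf₀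
  set f₁ : X →L[ℝ] ℝ := ‖f₀‖⁻¹ • f₀ with hf₁def
  have hf₁F : f₁ ∈ F := F.smul_mem _ hf₀F
  have hf₁1 : ‖f₁‖ = 1 := by
    rw [hf₁def, norm_smul (‖f₀‖⁻¹) f₀, Real.norm_eq_abs, abs_of_pos (inv_pos.mpr hf₀norm),
      inv_mul_cancel₀ hf₀norm.ne']
  -- inner set facts
  have inner_ne : ∀ (x : X) (ξ : (X →L[ℝ] ℝ) →L[ℝ] ℝ),
      {t : ℝ | ∃ f ∈ F, ‖f‖ = 1 ∧ t = (J x - ξ) f}.Nonempty :=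
    fun x ξ => ⟨(J x - ξ) f₁, f₁, hf₁F, hf₁1, rfl⟩
  have inner_bdd : ∀ (x : X) (ξ : (X →L[ℝ] ℝ) →L[ℝ] ℝ),
      BddAbove {t : ℝ | ∃ f ∈ F, ‖f‖ = 1 ∧ t = (J x - ξ) f} := by
    intro x ξ
    refine ⟨‖J x - ξ‖, ?_⟩
    rintro t ⟨f, hfF, hf1, rfl⟩
    calc (J x - ξ) f ≤ ‖(J x - ξ) f‖ := le_abs_self _
      _ ≤ ‖J x - ξ‖ * ‖f‖ := (J x - ξ).le_opNorm f
      _ = ‖J x - ξ‖ := by rw [hf1, mul_one]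
  have inner_nonneg : ∀ (x : X) (ξ : (X →L[ℝ] ℝ) →L[ℝ] ℝ),
      0 ≤ sSup {t : ℝ | ∃ f ∈ F, ‖f‖ = 1 ∧ t = (J x - ξ) f} := by
    intro x ξ
    have h1 : (J x - ξ) f₁ ≤ sSup {t : ℝ | ∃ f ∈ F, ‖f‖ = 1 ∧ t = (J x - ξ) f} :=
      le_csSup (inner_bdd x ξ) ⟨f₁, hf₁F, hf₁1, rfl⟩
    have h2 : -((J x - ξ) f₁) ≤ sSup {t : ℝ | ∃ f ∈ F, ‖f‖ = 1 ∧ t = (J x - ξ) f} := by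
      refine le_csSup (inner_bdd x ξ) ⟨-f₁, F.neg_mem hf₁F, ?_, ?_⟩
      · rw [norm_neg, hf₁1]
      · rw [map_neg]
    linarith
  have S_bdd : ∀ x : X, BddBelow {r : ℝ |
      ∃ ξ ∈ @closure _ (wstarTopology X) (J '' A),
        r = sSup {t : ℝ | ∃ f ∈ F, ‖f‖ = 1 ∧ t = (J x - ξ) f}} := by
    intro x
    refine ⟨0, ?_⟩
    rintro r ⟨ξ, hξ, rfl⟩
    exact inner_nonneg x ξ
  have S_ne : ∀ x : X, {r : ℝ |
      ∃ ξ ∈ @closure _ (wstarTopology X) (J '' A),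
        r = sSup {t : ℝ | ∃ f ∈ F, ‖f‖ = 1 ∧ t = (J x - ξ) f}}.Nonempty := by
    intro x
    refine ⟨_, J x₀, ?_, rfl⟩
    letI : TopologicalSpace ((X →L[ℝ] ℝ) →L[ℝ] ℝ) := wstarTopology X
    exact subset_closure ⟨x₀, hx₀, rfl⟩
  -- direction ψ ≤ φ
  have main1 : ∀ x : X, ψ x ≤ φ x := by
    intro x
    obtain ⟨ξ, hξp, hξc⟩ := exists_xi F hA hbdd psmul (hφ0 x) (hkey x)
    have hbound : ∀ g : X →L[ℝ] ℝ, ‖ξ g‖ ≤ R * ‖g‖ := by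
      intro g
      have h1 : ξ g ≤ ‖g‖ * R := le_trans (hξp g) (hsupb g)
      have h2 : -(ξ g) ≤ ‖g‖ * R := by
        have := le_trans (hξp (-g)) (hsupb (-g))
        rw [map_neg, norm_neg] at this
        exact this
      rw [Real.norm_eq_abs, mul_comm]
      exact abs_le.mpr ⟨by linarith, h1⟩
    set Ξ : (X →L[ℝ] ℝ) →L[ℝ] ℝ := LinearMap.mkContinuous ξ R hbound with hΞdef
    have hΞapp : ∀ g, Ξ g = ξ g := fun g => rfl
    have hcl : Ξ ∈ @closure _ (wstarTopology X) (J '' A) := by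
      refine mem_wstar_closure Ξ ?_
      intro I ε hε
      obtain ⟨a, haA, ha⟩ := findim_approx hA hAconv ξ hξp I hε
      exact ⟨a, haA, fun g hg => by rw [hΞapp]; exact ha g hg⟩
    rw [hψ x]
    refine le_trans (csInf_le (S_bdd x) ⟨Ξ, hcl, rfl⟩) ?_
    refine csSup_le (inner_ne x Ξ) ?_
    rintro t ⟨f, hfF, hf1, rfl⟩
    have h1 := hξc f hfF
    rw [hf1, one_mul] at h1
    have h2 : (J x - Ξ) f = f x - ξ f := by
      rw [ContinuousLinearMap.sub_apply, hΞapp, hJ, NormedSpace.dual_def]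
    rw [h2]
    linarith
  -- direction φ ≤ ψ
  have main2 : ∀ x : X, φ x ≤ ψ x := by
    intro x
    rw [hφ x, hψ x]
    refine le_csInf (S_ne x) ?_
    rintro r ⟨ξ, hξcl, rfl⟩
    refine csSup_le ⟨0, Or.inr rfl⟩ ?_
    rintro r (⟨⟨f, a⟩, hm, rfl⟩ | hr0)
    · rw [hΓ] at hm
      obtain ⟨hfF, hf1, hempty⟩ := hm
      have hξfa : ξ f ≤ a := by
        letI : TopologicalSpace ((X →L[ℝ] ℝ) →L[ℝ] ℝ) := wstarTopology X
        have hclosed : IsClosed {η : (X →L[ℝ] ℝ) →L[ℝ] ℝ | η f ≤ a} := by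
          have h1 : Continuous (fun η : (X →L[ℝ] ℝ) →L[ℝ] ℝ =>
              (fun g : X →L[ℝ] ℝ => η g)) := continuous_induced_dom
          have h2 : Continuous (fun η : (X →L[ℝ] ℝ) →L[ℝ] ℝ => η f) :=
            (continuous_apply f).comp h1
          exact isClosed_le h2 continuous_const
        have hsubset : J '' A ⊆ {η : (X →L[ℝ] ℝ) →L[ℝ] ℝ | η f ≤ a} := by
          rintro _ ⟨y, hy, rfl⟩
          have hJy : J y f = f y := rfl
          simp only [Set.mem_setOf_eq, hJy]
          by_contra hlt
          exact absurd hempty (Set.nonempty_iff_ne_empty.mp ⟨y, hy, not_le.mp hlt⟩)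
        exact closure_minimal hsubset hclosed hξcl
      have hmem : (J x - ξ) f ∈ {t : ℝ | ∃ f' ∈ F, ‖f'‖ = 1 ∧ t = (J x - ξ) f'} :=
        ⟨f, hfF, hf1, rfl⟩
      refine le_trans ?_ (le_csSup (inner_bdd x ξ) hmem)
      have h2 : (J x - ξ) f = f x - ξ f := by
        rw [ContinuousLinearMap.sub_apply]
        rfl
      rw [h2]
      simp only
      linarith
    · simp only [Set.mem_singleton_iff] at hr0
      subst hr0
      exact inner_nonneg x ξ
  exact ⟨main1, funext fun x => le_antisymm (main1 x) (main2 x)⟩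
end

section
/- Let X be a real Banach space, let (B_n)_{n<ω} be a decreasing sequence of w*-compact subsets of X* with B = ⋂_{n<ω} B_n, and let 𝒰 be a family of w*-open subsets of X*. For a subset C ⊆ X* put Γ(C) = { (x,a) ∈ S_X × (0,1) : H_{x,a} ∩ C ⊆ U for some U ∈ 𝒰 } and φ_C(h) = sup({ h(x) − a : (x,a) ∈ Γ(C) } ∪ {0}). Then for every h ∈ B, the sequence (φ_{B_n}(h))_{n<ω} is non-decreasing and φ_B(h) = lim_{n→∞} φ_{B_n}(h). -/
/-- For a decreasing sequence `(B n)` of weak-star compact subsets of `X*` with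
intersection `B`, a family `𝒰` of weak-star open sets, and the associated functions
`φ_C(h) = sup({h(x) - a : (x,a) ∈ Γ(C)} ∪ {0})` with
`Γ(C) = {(x,a) ∈ S_X × (0,1) : H_{x,a} ∩ C ⊆ U for some U ∈ 𝒰}`, for every `h ∈ B` the
sequence `(φ_{B n}(h))` is non-decreasing and converges to `φ_B(h)`. -/
theorem statement10 (X : Type*) [NormedAddCommGroup X] [NormedSpace ℝ X] [CompleteSpace X]
    (Bseq : ℕ → Set (WeakDual ℝ X)) (hcomp : ∀ n, IsCompact (Bseq n))
    (hdec : ∀ n, Bseq (n + 1) ⊆ Bseq n)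
    (B : Set (WeakDual ℝ X)) (hB : B = ⋂ n, Bseq n)
    (𝒰 : Set (Set (WeakDual ℝ X))) (hopen : ∀ U ∈ 𝒰, IsOpen U)
    (Γ : Set (WeakDual ℝ X) → Set (X × ℝ))
    (hΓ : ∀ C : Set (WeakDual ℝ X), Γ C = {p : X × ℝ | ‖p.1‖ = 1 ∧ p.2 ∈ Set.Ioo (0:ℝ) 1 ∧
      ∃ U ∈ 𝒰, {f : WeakDual ℝ X | f p.1 > p.2} ∩ C ⊆ U})
    (φ : Set (WeakDual ℝ X) → WeakDual ℝ X → ℝ)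
    (hφ : ∀ (C : Set (WeakDual ℝ X)) (h : WeakDual ℝ X),
      φ C h = sSup ({r : ℝ | ∃ p ∈ Γ C, r = h p.1 - p.2} ∪ {0}))
    (h : WeakDual ℝ X) (hh : h ∈ B) :
    Monotone (fun n => φ (Bseq n) h) ∧
      Filter.Tendsto (fun n => φ (Bseq n) h) Filter.atTop (nhds (φ B h)) := by
  set M : ℝ := ‖WeakDual.toStrongDual h‖ with hM
  -- the sets whose sup defines φ
  set S : Set (WeakDual ℝ X) → Set ℝ :=
    fun C => {r : ℝ | ∃ p ∈ Γ C, r = h p.1 - p.2} ∪ {0} with hS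
  have hSne : ∀ C, (S C).Nonempty := fun C => ⟨0, Or.inr rfl⟩
  have hSbdd : ∀ C, BddAbove (S C) := by
    intro C
    refine ⟨max M 0, ?_⟩
    rintro r (⟨⟨x, a⟩, hp, rfl⟩ | rfl)
    · rw [hΓ] at hp
      obtain ⟨hx, ha, -⟩ := hp
      have h1 : h x ≤ M := by
        have h2 := (WeakDual.toStrongDual h).le_opNorm x
        rw [hx, mul_one] at h2
        calc h x ≤ |h x| := le_abs_self _
          _ = ‖(WeakDual.toStrongDual h) x‖ := (Real.norm_eq_abs _).symm
          _ ≤ M := h2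
      have : h x - a ≤ M := by linarith [ha.1]
      exact this.trans (le_max_left _ _)
    · exact le_max_right _ _
  -- Γ is antitone, hence φ is antitone in C
  have hΓmono : ∀ {C D : Set (WeakDual ℝ X)}, C ⊆ D → Γ D ⊆ Γ C := by
    intro C D hCD p hp
    rw [hΓ] at hp ⊢
    obtain ⟨hx, ha, U, hU, hsub⟩ := hp
    exact ⟨hx, ha, U, hU, fun f hf => hsub ⟨hf.1, hCD hf.2⟩⟩
  have hφmono : ∀ {C D : Set (WeakDual ℝ X)}, C ⊆ D → φ D h ≤ φ C h := by
    intro C D hCD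
    rw [hφ, hφ]
    refine csSup_le_csSup (hSbdd C) (hSne D) ?_
    rintro r (⟨p, hp, rfl⟩ | rfl)
    · exact Or.inl ⟨p, hΓmono hCD hp, rfl⟩
    · exact Or.inr rfl
  have hBsub : ∀ n, B ⊆ Bseq n := by
    intro n; rw [hB]; exact Set.iInter_subset _ n
  have hmono : Monotone (fun n => φ (Bseq n) h) :=
    monotone_nat_of_le_succ fun n => hφmono (hdec n)
  have hle : ∀ n, φ (Bseq n) h ≤ φ B h := fun n => hφmono (hBsub n)
  refine ⟨hmono, ?_⟩
  -- key approximation lemma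
  have key : ∀ ε : ℝ, 0 < ε → ∃ n, φ B h - ε ≤ φ (Bseq n) h := by
    intro ε hε
    have h0 : (0:ℝ) ∈ S B := Or.inr rfl
    rcases lt_or_ge (φ B h - ε) 0 with hneg | hpos
    · refine ⟨0, ?_⟩
      have : (0:ℝ) ≤ φ (Bseq 0) h := by
        rw [hφ]; exact le_csSup (hSbdd _) (Or.inr rfl)
      linarith
    · -- pick r ∈ S B with r > φ B h - ε/2
      have hlt : φ B h - ε / 2 < sSup (S B) := by
        rw [← hφ]; linarith
      obtain ⟨r, hr, hrlt⟩ := exists_lt_of_lt_csSup (hSne B) hlt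
      rcases hr with ⟨⟨x, a⟩, hp, rfl⟩ | rfl
      · rw [hΓ] at hp
        obtain ⟨hx, ⟨ha0, ha1⟩, U, hU, hsub⟩ := hp
        -- choose a' ∈ (a, min 1 (a + ε/2))
        obtain ⟨a', ha'1, ha'2⟩ := exists_between (lt_min ha1 (show a < a + ε / 2 by linarith))
        have ha'lt1 : a' < 1 := ha'2.trans_le (min_le_left _ _)
        have ha'lta : a' < a + ε / 2 := ha'2.trans_le (min_le_right _ _)
        -- decreasing sequence of compacts
        set K : ℕ → Set (WeakDual ℝ X) :=
          fun n => Bseq n ∩ (Uᶜ ∩ {f : WeakDual ℝ X | a' ≤ f x}) with hK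
        have hKclosed : ∀ n, IsClosed (K n) :=
          fun n => (((hcomp n).isClosed).inter
            (((hopen U hU).isClosed_compl).inter
              (isClosed_le continuous_const (WeakDual.eval_continuous x))))
        have hKcomp : ∀ n, IsCompact (K n) :=
          fun n => (hcomp n).of_isClosed_subset (hKclosed n) Set.inter_subset_left
        have hKdec : ∀ n, K (n + 1) ⊆ K n :=
          fun n => Set.inter_subset_inter_left _ (hdec n)
        -- some K n must be empty
        by_cases hne : ∀ n, (K n).Nonempty
        · exfalso
          obtain ⟨f, hf⟩ := IsCompact.nonempty_iInter_of_sequence_nonempty_isCompact_isClosed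
            K hKdec hne (hKcomp 0) hKclosed
          have hfB : f ∈ B := by
            rw [hB, Set.mem_iInter]
            exact fun n => ((Set.mem_iInter.mp hf) n).1
          have hfU : f ∉ U := ((Set.mem_iInter.mp hf) 0).2.1
          have hfx : a' ≤ f x := ((Set.mem_iInter.mp hf) 0).2.2
          exact hfU (hsub ⟨lt_of_lt_of_le ha'1 hfx, hfB⟩)
        · push_neg at hne
          obtain ⟨n, hn⟩ := hne
          refine ⟨n, ?_⟩
          -- (x, a') ∈ Γ (Bseq n)
          have hmem : ((x, a') : X × ℝ) ∈ Γ (Bseq n) := by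
            rw [hΓ]
            refine ⟨hx, ⟨ha0.trans ha'1, ha'lt1⟩, U, hU, ?_⟩
            intro f hf
            by_contra hfU
            have : f ∈ K n := ⟨hf.2, hfU, show a' ≤ f x from le_of_lt hf.1⟩
            rw [hn] at this; exact this
          have : h x - a' ≤ φ (Bseq n) h := by
            rw [hφ]
            exact le_csSup (hSbdd _) (Or.inl ⟨(x, a'), hmem, rfl⟩)
          linarith
      · exact ⟨0, by linarith [hle 0, (show (0:ℝ) ≤ φ (Bseq 0) h from by
          rw [hφ]; exact le_csSup (hSbdd _) (Or.inr rfl))]⟩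
  -- conclude convergence
  have hbdd : BddAbove (Set.range fun n => φ (Bseq n) h) :=
    ⟨φ B h, by rintro r ⟨n, rfl⟩; exact hle n⟩
  have htend := tendsto_atTop_ciSup hmono hbdd
  have hsup : (⨆ n, φ (Bseq n) h) = φ B h := by
    refine le_antisymm (ciSup_le hle) ?_
    refine le_of_forall_pos_le_add ?_
    intro ε hε
    obtain ⟨n, hn⟩ := key ε hε
    calc φ B h ≤ φ (Bseq n) h + ε := by linarith
      _ ≤ (⨆ n, φ (Bseq n) h) + ε := by
          gcongr; exact le_ciSup hbdd n
  rwa [hsup] at htend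
end

section
/- Let X be a real Banach space. If the dual X*, equipped with the w*-topology, has a G_δ-diagonal, then X is separable. -/
open Filter Topology Set

section aux

variable (X : Type*) [NormedAddCommGroup X] [NormedSpace ℝ X]

/-- If there is a countable set `D` such that every continuous functional vanishing on `D`
is zero, then `X` is separable. -/
lemma aux_separable_of_countable_separating (D : Set X) (hD : D.Countable)
    (hsep : ∀ f : X →L[ℝ] ℝ, (∀ x ∈ D, f x = 0) → f = 0) :
    TopologicalSpace.SeparableSpace X := by
  set M : Submodule ℝ X := (Submodule.span ℝ D).topologicalClosure with hM
  have hMtop : (M : Set X) = Set.univ := by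
    by_contra hne
    obtain ⟨x, hx⟩ : ∃ x : X, x ∉ (M : Set X) := by
      by_contra h'
      push_neg at h'
      exact hne (Set.eq_univ_of_forall h')
    obtain ⟨f, u, hfx, hfM⟩ := geometric_hahn_banach_point_closed
      (M.convex) (Submodule.isClosed_topologicalClosure _) hx
    have hu0 : u < 0 := by simpa using hfM 0 M.zero_mem
    have hfzero : ∀ b ∈ M, f b = 0 := by
      intro b hb
      by_contra hfb
      have : (u / f b) • b ∈ M := M.smul_mem _ hb
      have := hfM _ this
      rw [map_smul] at this
      simp only [smul_eq_mul] at this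
      rw [div_mul_cancel₀ u hfb] at this
      exact lt_irrefl _ this
    have : f = 0 := by
      refine hsep f fun x hxD => hfzero x ?_
      exact Submodule.le_topologicalClosure _ (Submodule.subset_span hxD)
    rw [this] at hfx
    simp only [ContinuousLinearMap.zero_apply] at hfx
    linarith
  have hsepM : TopologicalSpace.IsSeparable (M : Set X) := by
    rw [hM]
    exact (hD.isSeparable.span).closure
  rw [hMtop] at hsepM
  exact TopologicalSpace.isSeparable_univ_iff.mp hsepM

end aux

/-- If the dual of a Banach space `X`, equipped with the weak-star topology, has a
`G_δ`-diagonal, then `X` is separable. -/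
theorem statement13 (X : Type*) [NormedAddCommGroup X] [NormedSpace ℝ X] [CompleteSpace X]
    (h : IsGδ (Set.diagonal (WeakDual ℝ X))) :
    TopologicalSpace.SeparableSpace X := by
  -- extract a countable family of open sets intersecting to the diagonal
  obtain ⟨V, hVopen, hVeq⟩ := isGδ_iff_eq_iInter_nat.mp h
  -- the singleton {0} is a Gδ in the weak-* topology
  set φ : WeakDual ℝ X → WeakDual ℝ X × WeakDual ℝ X := fun g => (g, 0) with hφ
  have hφc : Continuous φ := Continuous.prodMk continuous_id continuous_const
  set U : ℕ → Set (WeakDual ℝ X) := fun n => φ ⁻¹' (V n) with hU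
  have hUopen : ∀ n, IsOpen (U n) := fun n => (hVopen n).preimage hφc
  have hUeq : ({0} : Set (WeakDual ℝ X)) = ⋂ n, U n := by
    have : ({0} : Set (WeakDual ℝ X)) = φ ⁻¹' (Set.diagonal (WeakDual ℝ X)) := by
      ext g
      simp [hφ, Set.diagonal, eq_comm]
    rw [this, hVeq, Set.preimage_iInter]
  -- extract finite sets of points determining neighborhoods of 0
  have hEmb := WeakBilin.isEmbedding (B := topDualPairing ℝ X)
    ContinuousLinearMap.coe_injective
  have hnhds := hEmb.isInducing.nhds_eq_comap (0 : WeakDual ℝ X)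
  have key : ∀ n : ℕ, ∃ I : Set X, I.Finite ∧
      ∀ g : WeakDual ℝ X, (∀ x ∈ I, g x = 0) → g ∈ U n := by
    intro n
    have hUn : U n ∈ 𝓝 (0 : WeakDual ℝ X) := (hUopen n).mem_nhds (by
      have : (0 : WeakDual ℝ X) ∈ ⋂ n, U n := by rw [← hUeq]; rfl
      exact Set.mem_iInter.mp this n)
    replace hUn := Filter.le_def.mp hnhds.ge _ hUn
    obtain ⟨t, ht, hts⟩ := Filter.mem_comap.mp hUn
    rw [nhds_pi, Filter.mem_pi] at ht
    obtain ⟨I, hIfin, w, hw, hwt⟩ := ht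
    refine ⟨I, hIfin, fun g hg => ?_⟩
    apply hts
    apply hwt
    intro x hxI
    show (topDualPairing ℝ X) g x ∈ w x
    have : (topDualPairing ℝ X) g x = 0 := hg x hxI
    rw [this]
    have h0 : (topDualPairing ℝ X) (0 : WeakDual ℝ X) x = 0 := rfl
    have := hw x
    rw [h0] at this
    exact mem_of_mem_nhds this
  choose I hIfin hIkey using key
  refine aux_separable_of_countable_separating X (⋃ n, I n)
    (Set.countable_iUnion fun n => (hIfin n).countable) ?_
  intro f hf
  have : (f : WeakDual ℝ X) ∈ ⋂ n, U n := by
    refine Set.mem_iInter.mpr fun n => hIkey n _ fun x hx => ?_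
    exact hf x (Set.mem_iUnion.mpr ⟨n, hx⟩)
  rw [← hUeq] at this
  exact this
end
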